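/- For the Legendre scaling functions φ_j(x) = √(2j+1) P_j(2x−1) on (0,1) (zero elsewhere), the Fourier transforms satisfy the recursion F φ_{j+1}(ξ) = √((2j+3)/(2j−1)) · F φ_{j−1}(ξ) + (2√((2j+1)(2j+3))/(iξ)) · F φ_j(ξ) for all j ≥ 1 and ξ ≠ 0. -/

import Mathlib

open MeasureTheory Polynomial

/-- The `j`-th Legendre polynomial, via the Rodrigues formula. -/
noncomputable def legendre (j : ℕ) : Polynomial ℝ :=
  Polynomial.C (1 / (2^j * (j.factorial : ℝ))) *
    (Polynomial.derivative^[j] ((Polynomial.X^2 - 1)^j))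

/-- The Legendre scaling function `φ_j(x) = √(2j+1)·P_j(2x−1)` on (0,1), 0 elsewhere. -/
noncomputable def phi (j : ℕ) : ℝ → ℝ := fun x =>
  if x ∈ Set.Ioo (0:ℝ) 1 then Real.sqrt (2*j+1) * (legendre j).eval (2*x - 1) else 0

/-- The Fourier transform `F f ξ = ∫ f(x) e^{-iξx} dx`. -/
noncomputable def fourierT (f : ℝ → ℝ) (ξ : ℝ) : ℂ :=
  ∫ x : ℝ, (f x : ℂ) * Complex.exp (-Complex.I * ξ * x)


noncomputable def uu (m : ℕ) : Polynomial ℝ := (X^2 - 1)^m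

lemma Cexp : ∀ (a b : ℝ), C (a + b) = C a + C b := fun a b => map_add C a b

lemma deriv_uu (m : ℕ) : derivative (uu (m+1)) = C (2*(m:ℝ)+2) * (X * uu m) := by
  unfold uu
  rw [derivative_pow]
  simp only [derivative_sub, derivative_one, derivative_X_pow, map_add, map_mul, map_ofNat,
    Nat.cast_add, Nat.cast_one, Nat.add_sub_cancel, sub_zero, Nat.cast_ofNat, pow_one, map_one]
  ring

lemma iterX (k : ℕ) (p : Polynomial ℝ) :
    derivative^[k+1] (X * p) = X * derivative^[k+1] p + C ((k:ℝ)+1) * derivative^[k] p := by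
  induction k with
  | zero => simp only [Function.iterate_one, derivative_mul, derivative_X, one_mul,
      Nat.cast_zero, zero_add, map_one, Function.iterate_zero_apply]; ring
  | succ k ih =>
    rw [show k+1+1 = (k+1)+1 from rfl, Function.iterate_succ_apply', ih]
    rw [derivative_add, derivative_mul, derivative_mul, derivative_X, derivative_C]
    rw [← Function.iterate_succ_apply' derivative (k+1), ← Function.iterate_succ_apply' derivative k]
    simp only [map_add, map_one, Nat.cast_add, Nat.cast_one]
    ring

lemma iterX0 (k : ℕ) (p : Polynomial ℝ) :
    derivative^[k] (X * p) = X * derivative^[k] p + C (k:ℝ) * derivative^[k-1] p := by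
  cases k with
  | zero => simp
  | succ k => rw [iterX]; push_cast; ring_nf

lemma base_ode (m : ℕ) : (X^2 - 1 : Polynomial ℝ) * derivative (uu m)
    = C (2*(m:ℝ)) * (X * uu m) := by
  cases m with
  | zero => simp [uu]
  | succ m =>
    rw [deriv_uu]
    have h : (X^2 - 1 : Polynomial ℝ) * uu m = uu (m+1) := by rw [uu, uu, ← pow_succ']
    simp only [map_add, map_mul, map_ofNat, Nat.cast_add, Nat.cast_one, map_one]
    linear_combination ((2:Polynomial ℝ) * C (m:ℝ) + 2) * X * h

lemma ode (m k : ℕ) : (X^2 - 1 : Polynomial ℝ) * derivative^[k+2] (uu m)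
    = C (2*(m:ℝ) - 2*k - 2) * (X * derivative^[k+1] (uu m))
      + C (((k:ℝ)+1) * (2*m - k)) * derivative^[k] (uu m) := by
  induction k with
  | zero =>
    have H := congrArg derivative (base_ode m)
    rw [derivative_mul, derivative_mul, derivative_sub, derivative_one, derivative_X_pow,
      derivative_mul, derivative_X, derivative_C] at H
    simp only [Function.iterate_succ_apply, Function.iterate_zero_apply,
      Function.iterate_one] at *
    simp only [map_sub, map_add, map_mul, map_ofNat, map_one, Nat.cast_zero, Nat.cast_ofNat,
      pow_one, sub_zero, zero_mul, one_mul, mul_one, zero_add, map_zero, mul_zero] at H ⊢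
    linear_combination H
  | succ k ih =>
    have H := congrArg derivative ih
    rw [derivative_mul, derivative_add, derivative_mul, derivative_mul, derivative_mul,
      derivative_sub, derivative_one, derivative_X_pow, derivative_X, derivative_C,
      derivative_C] at H
    rw [← Function.iterate_succ_apply' derivative (k+2),
      ← Function.iterate_succ_apply' derivative (k+1),
      ← Function.iterate_succ_apply' derivative k] at H
    simp only [map_sub, map_add, map_mul, map_ofNat, map_one, Nat.cast_add, Nat.cast_one,
      Nat.cast_ofNat, pow_one, sub_zero, zero_mul, one_mul, mul_one, zero_add,
      show k+1+1 = k+2 from rfl, show k+1+2 = k+3 from rfl, show k+2+1 = k+3 from rfl] at H ⊢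
    linear_combination H

lemma ode' (n : ℕ) : (X^2 - 1 : Polynomial ℝ) * derivative^[n+1] (uu n)
    = C ((n:ℝ)*(n+1)) * derivative^[n-1] (uu n) := by
  cases n with
  | zero => simp [uu]
  | succ n =>
    have h := ode (n+1) n
    push_cast at h ⊢
    simp only [show n+2 = n+1+1 from rfl, Nat.add_sub_cancel] at h ⊢
    rw [h]
    have e1 : (2*((n:ℝ)+1) - 2*n - 2) = 0 := by ring
    have e2 : ((n:ℝ)+1) * (2*(n+1) - n) = (n+1)*(n+1+1) := by ring
    rw [e1, e2, map_zero]
    ring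

lemma key (n : ℕ) : derivative^[n+3] (uu (n+2))
    = C (4*((n:ℝ)+1)*(n+2)) * derivative^[n+1] (uu n)
      + C (2*((n:ℝ)+2)*(2*n+3)) * derivative^[n+1] (uu (n+1)) := by
  have h1 : derivative^[n+3] (uu (n+2))
      = C (2*((n:ℝ)+1)+2) * derivative^[n+2] (X * uu (n+1)) := by
    rw [show n+3 = (n+2)+1 from rfl, Function.iterate_succ_apply, deriv_uu,
      iterate_derivative_C_mul]
    push_cast; ring_nf
  have h2 := iterX (n+1) (uu (n+1))
  have h3 : derivative^[n+2] (uu (n+1))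
      = C (2*(n:ℝ)+2) * derivative^[n+1] (X * uu n) := by
    rw [show n+2 = (n+1)+1 from rfl, Function.iterate_succ_apply, deriv_uu,
      iterate_derivative_C_mul]
  have h4 : derivative^[n+1] (uu (n+1))
      = C (2*(n:ℝ)+2) * derivative^[n] (X * uu n) := by
    rw [Function.iterate_succ_apply, deriv_uu, iterate_derivative_C_mul]
  have h5 := iterX n (uu n)
  have h6 := iterX0 n (uu n)
  have h7 := ode' n
  rw [h1, h2, h3, h4, h5, h6]
  simp only [map_sub, map_add, map_mul, map_ofNat, map_one, Nat.cast_add, Nat.cast_one] at *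
  linear_combination (4*(C (n:ℝ)+1)*(C (n:ℝ)+2)) * h7

lemma legendre_eq (j : ℕ) :
    legendre j = C (1 / (2^j * (j.factorial : ℝ))) * derivative^[j] (uu j) := rfl

lemma legendre_rec (n : ℕ) : derivative (legendre (n+2))
    = derivative (legendre n) + C (2*(n:ℝ)+3) * legendre (n+1) := by
  rw [legendre_eq, legendre_eq, legendre_eq, derivative_C_mul, derivative_C_mul,
    ← Function.iterate_succ_apply' derivative (n+2), ← Function.iterate_succ_apply' derivative n]
  simp only [Nat.succ_eq_add_one]
  rw [show (n+2)+1 = n+3 from rfl, key]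
  have hf0 : ((n.factorial : ℝ)) ≠ 0 := Nat.cast_ne_zero.mpr n.factorial_ne_zero
  have hf1 : (((n+1).factorial : ℝ)) ≠ 0 := Nat.cast_ne_zero.mpr (n+1).factorial_ne_zero
  have h2 : ((2:ℝ))^n ≠ 0 := by positivity
  have e1 : 1 / (2^(n+2) * ((n+2).factorial : ℝ)) * (4*((n:ℝ)+1)*(n+2))
      = 1 / (2^n * (n.factorial : ℝ)) := by
    rw [Nat.factorial_succ, Nat.factorial_succ]
    push_cast
    field_simp
    ring
  have e2 : 1 / (2^(n+2) * ((n+2).factorial : ℝ)) * (2*((n:ℝ)+2)*(2*n+3))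
      = (2*(n:ℝ)+3) * (1 / (2^(n+1) * ((n+1).factorial : ℝ))) := by
    rw [Nat.factorial_succ (n+1)]
    push_cast
    field_simp
    ring
  have h1 : C (1 / (2^(n+2) * ((n+2).factorial : ℝ))) * C (4*((n:ℝ)+1)*(n+2))
      = C (1 / (2^n * ((n.factorial : ℝ)))) := by rw [← map_mul]; exact congrArg C e1
  have h2 : C (1 / (2^(n+2) * ((n+2).factorial : ℝ))) * C (2*((n:ℝ)+2)*(2*n+3))
      = C (2*(n:ℝ)+3) * C (1 / (2^(n+1) * ((n+1).factorial : ℝ))) := by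
    rw [← map_mul, ← map_mul]; exact congrArg C e2
  linear_combination (⇑derivative)^[n + 1] (uu n) * h1 + (⇑derivative)^[n + 1] (uu (n+1)) * h2

lemma uu_factor (n : ℕ) : uu n = (X - C (1:ℝ))^n * (X - C (-1:ℝ))^n := by
  rw [uu, ← mul_pow]
  congr 1
  simp only [map_one, map_neg]
  ring

lemma iter_eval_one (n : ℕ) :
    (derivative^[n] (uu n)).eval 1 = 2^n * n.factorial := by
  rw [uu_factor, iterate_derivative_mul, eval_finset_sum]
  rw [Finset.sum_eq_single 0]
  · rw [Nat.choose_zero_right, one_smul, Nat.sub_zero, Function.iterate_zero_apply,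
      iterate_derivative_X_sub_pow_self, eval_mul]
    simp only [eval_pow, eval_natCast, eval_sub, eval_X, eval_C, eval_one]
    norm_num [mul_comm]
  · intro b hb hb0
    rw [iterate_derivative_X_sub_pow]
    have hble : b ≤ n := Nat.lt_succ_iff.mp (Finset.mem_range.mp hb)
    rw [Nat.sub_sub_self hble]
    simp [eval_pow, zero_pow hb0]
  · intro h; simp at h
lemma iter_eval_neg_one (n : ℕ) :
    (derivative^[n] (uu n)).eval (-1) = (-2)^n * n.factorial := by
  rw [uu_factor, iterate_derivative_mul, eval_finset_sum]
  rw [Finset.sum_eq_single n]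
  · rw [Nat.choose_self, one_smul, Nat.sub_self, Function.iterate_zero_apply,
      iterate_derivative_X_sub_pow_self, eval_mul]
    simp only [eval_pow, eval_natCast, eval_sub, eval_X, eval_C, eval_one]
    norm_num
  · intro b hb hbn
    rw [iterate_derivative_X_sub_pow n b (-1 : ℝ)]
    have hble : b ≤ n := Nat.lt_succ_iff.mp (Finset.mem_range.mp hb)
    simp [eval_pow, zero_pow (fun h => hbn (Nat.le_antisymm hble (Nat.le_of_sub_eq_zero h)))]
  · intro h; simp at h

lemma legendre_eval_one (n : ℕ) : (legendre n).eval 1 = 1 := by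
  rw [legendre_eq, eval_mul, eval_C, iter_eval_one]
  have h1 : ((n.factorial : ℝ)) ≠ 0 := Nat.cast_ne_zero.mpr n.factorial_ne_zero
  have h2 : ((2:ℝ))^n ≠ 0 := by positivity
  field_simp

lemma legendre_eval_neg_one (n : ℕ) : (legendre n).eval (-1) = (-1)^n := by
  rw [legendre_eq, eval_mul, eval_C, iter_eval_neg_one]
  have h1 : ((n.factorial : ℝ)) ≠ 0 := Nat.cast_ne_zero.mpr n.factorial_ne_zero
  have h2 : ((2:ℝ))^n ≠ 0 := by positivity
  have : ((-2:ℝ))^n = (-1)^n * 2^n := by rw [← neg_one_mul, mul_pow]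
  rw [this]
  field_simp

open MeasureTheory in
noncomputable def II (m : ℕ) (ξ : ℝ) : ℂ :=
  ∫ x in (0:ℝ)..1, (((legendre m).eval (2*x-1) : ℝ) : ℂ) * Complex.exp (-Complex.I * ξ * x)

open MeasureTheory in
lemma fourierT_phi (m : ℕ) (ξ : ℝ) :
    fourierT (phi m) ξ = (Real.sqrt (2*m+1) : ℂ) * II m ξ := by
  unfold fourierT phi II
  have h : ∀ x : ℝ, ((if x ∈ Set.Ioo (0:ℝ) 1 then
        Real.sqrt (2*m+1) * (legendre m).eval (2*x-1) else 0 : ℝ) : ℂ)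
        * Complex.exp (-Complex.I * ξ * x)
      = Set.indicator (Set.Ioo (0:ℝ) 1)
          (fun x => (Real.sqrt (2*m+1) : ℂ) *
            ((((legendre m).eval (2*x-1) : ℝ) : ℂ) * Complex.exp (-Complex.I * ξ * x))) x := by
    intro x
    by_cases hx : x ∈ Set.Ioo (0:ℝ) 1
    · simp only [if_pos hx, Set.indicator_of_mem hx]
      push_cast
      ring
    · rw [Set.indicator_of_notMem hx, if_neg hx]
      simp
  simp_rw [h]
  rw [MeasureTheory.integral_indicator measurableSet_Ioo,
    ← MeasureTheory.integral_Ioc_eq_integral_Ioo,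
    ← intervalIntegral.integral_of_le (by norm_num : (0:ℝ) ≤ 1),
    intervalIntegral.integral_const_mul]

lemma cont_aux (p : Polynomial ℝ) (ξ : ℝ) :
    Continuous (fun x : ℝ => ((p.eval (2*x-1) : ℝ) : ℂ) * Complex.exp (-Complex.I * ξ * x)) := by
  apply Continuous.mul
  · exact Complex.continuous_ofReal.comp (p.continuous.comp (by continuity))
  · exact Complex.continuous_exp.comp (by continuity)

lemma exp_hasDerivAt (ξ : ℝ) (x : ℝ) :
    HasDerivAt (fun y : ℝ => Complex.exp (-Complex.I * ξ * y))
      (-Complex.I * ξ * Complex.exp (-Complex.I * ξ * x)) x := by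
  have h2 : HasDerivAt (fun y : ℝ => -Complex.I * ξ * (y : ℂ)) (-Complex.I * ξ) x := by
    simpa using (Complex.ofRealCLM.hasDerivAt (x := x)).const_mul (-Complex.I * ξ)
  have := h2.cexp
  convert this using 1
  ring

lemma poly_hasDerivAt (p : Polynomial ℝ) (x : ℝ) :
    HasDerivAt (fun y : ℝ => ((p.eval (2*y-1) : ℝ) : ℂ))
      ((2 * (derivative p).eval (2*x-1) : ℝ) : ℂ) x := by
  have h2 : HasDerivAt (fun y : ℝ => 2*y-1) 2 x := by
    simpa using ((hasDerivAt_id x).const_mul 2).sub_const 1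
  have h3 : HasDerivAt (fun y : ℝ => p.eval (2*y-1)) ((derivative p).eval (2*x-1) * 2) x :=
    by have := (p.hasDerivAt (2*x-1)).comp x h2; exact this
  have := h3.ofReal_comp
  convert this using 1
  push_cast
  ring

open MeasureTheory intervalIntegral in
lemma II_rec (n : ℕ) (ξ : ℝ) (hξ : ξ ≠ 0) :
    II (n+2) ξ = II n ξ + (2*(2*(n:ℝ)+3) / (Complex.I * ξ)) * II (n+1) ξ := by
  set Q : Polynomial ℝ := legendre (n+2) - legendre n with hQ
  have hdQ : derivative Q = Polynomial.C (2*(n:ℝ)+3) * legendre (n+1) := by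
    rw [hQ, derivative_sub, legendre_rec]
    ring
  have hIbp := intervalIntegral.integral_mul_deriv_eq_deriv_mul
    (u := fun x : ℝ => ((Q.eval (2*x-1) : ℝ) : ℂ))
    (v := fun x : ℝ => Complex.exp (-Complex.I * ξ * x))
    (u' := fun x : ℝ => ((2 * (derivative Q).eval (2*x-1) : ℝ) : ℂ))
    (v' := fun x : ℝ => -Complex.I * ξ * Complex.exp (-Complex.I * ξ * x))
    (a := 0) (b := 1)
    (fun x _ => poly_hasDerivAt Q x) (fun x _ => exp_hasDerivAt ξ x)
    (by apply Continuous.intervalIntegrable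
        exact Complex.continuous_ofReal.comp (continuous_const.mul
          ((derivative Q).continuous.comp (by continuity))))
    (by apply Continuous.intervalIntegrable
        exact continuous_const.mul (Complex.continuous_exp.comp (by continuity)))
  -- boundary terms vanish
  have hb1 : Q.eval (2*(1:ℝ)-1) = 0 := by
    norm_num [hQ, Polynomial.eval_sub, legendre_eval_one]
  have hb0 : Q.eval (2*(0:ℝ)-1) = 0 := by
    norm_num [hQ, Polynomial.eval_sub, legendre_eval_neg_one, pow_succ]
  beta_reduce at hIbp
  rw [hb1, hb0] at hIbp
  simp only [Complex.ofReal_zero, zero_mul, sub_zero, zero_sub] at hIbp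
  -- rewrite LHS of hIbp
  have hL : (∫ x in (0:ℝ)..1, ((Q.eval (2*x-1) : ℝ) : ℂ)
        * (-Complex.I * ξ * Complex.exp (-Complex.I * ξ * x)))
      = (-Complex.I * ξ) * (II (n+2) ξ - II n ξ) := by
    unfold II
    rw [← intervalIntegral.integral_sub
      ((cont_aux _ ξ).intervalIntegrable _ _) ((cont_aux _ ξ).intervalIntegrable _ _),
      ← intervalIntegral.integral_const_mul]
    apply intervalIntegral.integral_congr
    intro x _
    simp only [hQ, Polynomial.eval_sub]
    push_cast
    ring
  have hR : (∫ x in (0:ℝ)..1, ((2 * (derivative Q).eval (2*x-1) : ℝ) : ℂ)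
        * Complex.exp (-Complex.I * ξ * x))
      = (2*(2*(n:ℝ)+3)) * II (n+1) ξ := by
    unfold II
    rw [← intervalIntegral.integral_const_mul]
    apply intervalIntegral.integral_congr
    intro x _
    rw [hdQ]
    simp only [Polynomial.eval_mul, Polynomial.eval_C]
    push_cast
    ring
  rw [hL, hR] at hIbp
  have hIξ : (Complex.I * ξ) ≠ 0 := by
    simp [Complex.I_ne_zero, Complex.ofReal_ne_zero, hξ]
  field_simp
  push_cast at hIbp ⊢
  have hξC : (ξ:ℂ) ≠ 0 := Complex.ofReal_ne_zero.mpr hξ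
  field_simp
  linear_combination (-1 : ℂ) * hIbp

theorem fourier_legendre_scaling_recursion (j : ℕ) (hj : 1 ≤ j) (ξ : ℝ) (hξ : ξ ≠ 0) :
    fourierT (phi (j+1)) ξ
      = (Real.sqrt ((2*j+3) / (2*j-1)) : ℝ) * fourierT (phi (j-1)) ξ
      + (2 * (Real.sqrt ((2*j+1) * (2*j+3)) : ℝ) / (Complex.I * ξ)) * fourierT (phi j) ξ := by
  obtain ⟨n, rfl⟩ : ∃ n, j = n+1 := ⟨j-1, (Nat.succ_pred_eq_of_pos hj).symm⟩
  simp only [Nat.add_sub_cancel]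
  rw [show n+1+1 = n+2 from rfl, fourierT_phi, fourierT_phi, fourierT_phi, II_rec n ξ hξ]
  rw [show (2*((n+2:ℕ)):ℝ)+1 = 2*n+5 by push_cast; ring,
    show (2*((n+1:ℕ)):ℝ)+1 = 2*n+3 by push_cast; ring,
    show ((2*((n+1:ℕ)):ℝ)+3) / ((2*((n+1:ℕ)):ℝ)-1) = (2*(n:ℝ)+5)/(2*n+1) by push_cast; ring_nf,
    show ((2*((n+1:ℕ)):ℝ)+3) = 2*(n:ℝ)+5 by push_cast; ring]
  have h1 : (0:ℝ) < 2*n+1 := by positivity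
  have h3 : (0:ℝ) ≤ 2*(n:ℝ)+3 := by positivity
  have h5 : (0:ℝ) ≤ 2*(n:ℝ)+5 := by positivity
  have E1 : Real.sqrt ((2*(n:ℝ)+5)/(2*n+1)) * Real.sqrt (2*n+1) = Real.sqrt (2*n+5) := by
    rw [Real.sqrt_div h5, div_mul_cancel₀]
    exact (Real.sqrt_ne_zero h1.le).mpr (by positivity)
  have E2 : Real.sqrt ((2*(n:ℝ)+3)*(2*n+5)) * Real.sqrt (2*n+3)
      = (2*(n:ℝ)+3) * Real.sqrt (2*n+5) := by
    rw [Real.sqrt_mul h3, mul_right_comm, Real.mul_self_sqrt h3]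
  have E1C := congrArg (Complex.ofReal) E1
  have E2C := congrArg (Complex.ofReal) E2
  have hIξ : (Complex.I * (ξ:ℂ)) ≠ 0 := by
    simp [Complex.I_ne_zero, Complex.ofReal_ne_zero, hξ]
  push_cast at E1C E2C ⊢
  linear_combination (-(II n ξ)) * E1C - (2/(Complex.I*(ξ:ℂ))) * II (n+1) ξ * E2C
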